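/- Let g ≥ 2, n ≥ 1, and r ≥ 3 be integers, and define h : ℕ → ℤ by h(1) = g and h(j) = j(2g−2) + (j−1)n − g + 1 for j ≥ 2. Then: (a) for every integer d with 1 < d and 2d < r, Σ_{j=1}^{d} h(j) + Σ_{j=2}^{r−2d} h(j) < Σ_{j=1}^{r−2} h(j) (the second sum being empty when r−2d < 2); and (b) if r is even, Σ_{j=2}^{r/2} h(j) < Σ_{j=1}^{r−2} h(j). -/
import Mathlib


theorem stmt_18 (g n : ℤ) (r : ℕ) (hg : 2 ≤ g) (hn : 1 ≤ n) (hr : 3 ≤ r)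
    (h : ℕ → ℤ) (h1 : h 1 = g)
    (hj : ∀ j : ℕ, 2 ≤ j → h j = (j : ℤ) * (2 * g - 2) + ((j : ℤ) - 1) * n - g + 1) :
    (∀ d : ℕ, 1 < d → 2 * d < r →
      (∑ j ∈ Finset.Icc 1 d, h j) + (∑ j ∈ Finset.Icc 2 (r - 2 * d), h j) <
        ∑ j ∈ Finset.Icc 1 (r - 2), h j) ∧
    (Even r → (∑ j ∈ Finset.Icc 2 (r / 2), h j) < ∑ j ∈ Finset.Icc 1 (r - 2), h j) := by
  -- closed form for S m = ∑_{j=1}^m h j (m ≥ 1), doubled to avoid division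
  have S : ∀ m : ℕ, 1 ≤ m →
      2 * (∑ j ∈ Finset.Icc 1 m, h j) =
        2 * (g - 1) * (m : ℤ) ^ 2 + n * (m : ℤ) * ((m : ℤ) - 1) + 2 := by
    intro m hm
    induction m with
    | zero => omega
    | succ k ih =>
      rcases Nat.eq_or_lt_of_le hm with h0 | h0
      · have : k = 0 := by omega
        subst this
        simp [h1]; ring
      · have hk : 1 ≤ k := by omega
        rw [show k + 1 = k + 1 from rfl, Finset.sum_Icc_succ_top (by omega : 1 ≤ k + 1)]
        have hhk : h (k + 1) = ((k : ℤ) + 1) * (2 * g - 2) + (((k : ℤ) + 1) - 1) * n - g + 1 := by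
          have := hj (k + 1) (by omega)
          push_cast at this ⊢
          linarith [this]
        have := ih hk
        push_cast at this ⊢
        nlinarith [this, hhk]
  have T : ∀ m : ℕ, 1 ≤ m →
      2 * (∑ j ∈ Finset.Icc 2 m, h j) =
        2 * (g - 1) * (m : ℤ) ^ 2 + n * (m : ℤ) * ((m : ℤ) - 1) + 2 - 2 * g := by
    intro m hm
    have hsplit : ∑ j ∈ Finset.Icc 1 m, h j = h 1 + ∑ j ∈ Finset.Icc 2 m, h j := by
      rw [show Finset.Icc 1 m = insert 1 (Finset.Icc 2 m) by
        ext x; simp [Finset.mem_Icc, Finset.mem_insert]; omega]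
      rw [Finset.sum_insert (by simp)]
    have := S m hm
    rw [hsplit, h1] at this
    linarith
  constructor
  · intro d hd hdr
    have hm1 : 1 ≤ r - 2 * d := by omega
    have hS1 := S d (by omega)
    have hT := T (r - 2 * d) hm1
    have hS2 := S (r - 2) (by omega)
    have hc1 : ((r - 2 * d : ℕ) : ℤ) = (r : ℤ) - 2 * (d : ℤ) := by
      push_cast [Nat.cast_sub (by omega : 2 * d ≤ r)]; ring
    have hc2 : ((r - 2 : ℕ) : ℤ) = (r : ℤ) - 2 := by
      push_cast [Nat.cast_sub (by omega : 2 ≤ r)]; ring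
    rw [hc1] at hT
    rw [hc2] at hS2
    have hD : (2 : ℤ) ≤ (d : ℤ) := by exact_mod_cast hd
    have hM : (1 : ℤ) ≤ (r : ℤ) - 2 * (d : ℤ) := by
      have : (1 : ℤ) ≤ ((r - 2 * d : ℕ) : ℤ) := by exact_mod_cast hm1
      rwa [hc1] at this
    nlinarith [hS1, hT, hS2, hD, hM, hg, hn, sq_nonneg ((d : ℤ) - 2),
      sq_nonneg ((r : ℤ) - 2 * d - 1), mul_pos (by linarith : (0:ℤ) < (d:ℤ) - 1)
        (by linarith : (0:ℤ) < (r:ℤ) - 2 * (d:ℤ))]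
  · intro hre
    obtain ⟨k, hk⟩ := hre
    have hk2 : 2 ≤ k := by omega
    have hrk : r = 2 * k := by omega
    have hhalf : r / 2 = k := by omega
    have hT := T k (by omega)
    have hS2 := S (r - 2) (by omega)
    have hc2 : ((r - 2 : ℕ) : ℤ) = 2 * (k : ℤ) - 2 := by
      push_cast [Nat.cast_sub (by omega : 2 ≤ r)]; omega
    rw [hc2] at hS2
    rw [hhalf]
    have hK : (2 : ℤ) ≤ (k : ℤ) := by exact_mod_cast hk2
    nlinarith [hT, hS2, hK, hg, hn, sq_nonneg ((k : ℤ) - 2)]
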